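/- (Dobrushin coefficient and mixing time of the context chain.) Under η-regularity of the Block MDP (only conditions (ii) and (iv) and the normalizations of π, q, p are needed), the context chain kernel satisfies P₀(z|x) ≥ (1/η²)·P₀(z|y) for all x, y, z ∈ X. Consequently its Dobrushin coefficient δ(P₀) := (1/2)·max_{x,y∈X} Σ_{z∈X} |P₀(z|x) − P₀(z|y)| satisfies δ(P₀) ≤ 1 − 1/η², and for every PMF μ₀ on X, every stationary distribution Π₀ of P₀, and every integer h ≥ 2η², d_TV(μ₀P₀^h, Π₀) ≤ 1/4; i.e., the mixing time of the context chain is at most 2η². -/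
import Mathlib


open Finset

/-- `μ` is a probability mass function on the finite type `Z`. -/
def IsPMF {Z : Type*} [Fintype Z] (μ : Z → ℝ) : Prop :=
  (∀ z, 0 ≤ μ z) ∧ ∑ z, μ z = 1

/-- Total variation distance between two mass functions on a finite type. -/
noncomputable def dTV {Z : Type*} [Fintype Z] (u v : Z → ℝ) : ℝ :=
  (1 / 2) * ∑ z, |u z - v z|

/-- Dobrushin ergodic coefficient `δ(P) = (1/2)·max_{x,y} Σ_z |P(z|x) − P(z|y)|`. -/
noncomputable def dobrushin {Z : Type*} [Fintype Z] [Nonempty Z] (P : Matrix Z Z ℝ) : ℝ :=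
  Finset.univ.sup' Finset.univ_nonempty fun q : Z × Z =>
    (1 / 2) * ∑ z, |P q.1 z - P q.2 z|

/-- **Dobrushin coefficient and mixing time of the context chain of a Block MDP.**
`p s a s'` is `p(s'|s,a)`, `q s x` is `q(x|s)`, `pol x a` is `π(a|x)`, and
`P0 x y = P₀(y|x) = Σ_a π(a|x)·q(y|f(y))·p(f(y)|f(x),a)`.  Only the normalizations of
`p`, `q`, `π` and the regularity conditions (ii) and (iv) are assumed. -/
theorem context_chain_dobrushin_and_mixing
    {X S A : Type*} [Fintype X] [Fintype S] [Fintype A]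
    [Nonempty X] [DecidableEq X]
    (η : ℝ) (hη : 1 ≤ η)
    (f : X → S)
    (p : S → A → S → ℝ) (hp : ∀ s a, (∀ s', 0 ≤ p s a s') ∧ ∑ s', p s a s' = 1)
    (q : S → X → ℝ)
    (hq : ∀ s, (∀ x, 0 ≤ q s x) ∧ (∀ x, f x ≠ s → q s x = 0) ∧ ∑ x, q s x = 1)
    (pol : X → A → ℝ) (hpol : ∀ x, (∀ a, 0 ≤ pol x a) ∧ ∑ a, pol x a = 1)
    -- η-regularity (ii)
    (hreg2 : ∀ (s₁ s₂ s₃ : S) (a : A),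
      p s₁ a s₂ ≤ η * p s₁ a s₃ ∧ p s₂ a s₁ ≤ η * p s₃ a s₁)
    -- η-regularity (iv)
    (hreg4 : ∀ (x y : X) (a₁ a₂ : A), pol x a₁ ≤ η * pol y a₂)
    (P0 : Matrix X X ℝ)
    (hP0 : ∀ x y, P0 x y = ∑ a, pol x a * (q (f y) y * p (f x) a (f y))) :
    (∀ x y z : X, 1 / η ^ 2 * P0 y z ≤ P0 x z)
    ∧ dobrushin P0 ≤ 1 - 1 / η ^ 2
    ∧ ∀ μ0 : X → ℝ, IsPMF μ0 →
        ∀ Pi0 : X → ℝ, IsPMF Pi0 → (∀ y, ∑ x, Pi0 x * P0 x y = Pi0 y) →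
          ∀ h : ℕ, 2 * η ^ 2 ≤ (h : ℝ) →
            dTV (Matrix.vecMul μ0 (P0 ^ h)) Pi0 ≤ 1 / 4 := by
  have hη0 : (0:ℝ) < η := lt_of_lt_of_le one_pos hη
  have hη2 : (0:ℝ) < η ^ 2 := by positivity
  set ε : ℝ := 1 / η ^ 2 with hεdef
  have hε0 : 0 < ε := by positivity
  have hε1 : ε ≤ 1 := by
    rw [hεdef, div_le_one hη2]; nlinarith
  -- nonnegativity of P0 entries
  have hnonneg : ∀ x z : X, 0 ≤ P0 x z := by
    intro x z
    rw [hP0]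
    apply Finset.sum_nonneg
    intro a _
    have h1 := (hpol x).1 a
    have h2 := (hq (f z)).1 z
    have h3 := (hp (f x) a).1 (f z)
    positivity
  -- row sums are 1
  have hrow : ∀ x : X, ∑ z, P0 x z = 1 := by
    intro x
    calc ∑ z, P0 x z = ∑ z, ∑ a, pol x a * (q (f z) z * p (f x) a (f z)) := by
          simp only [hP0]
      _ = ∑ a, pol x a * ∑ z, q (f z) z * p (f x) a (f z) := by
          rw [Finset.sum_comm]
          exact Finset.sum_congr rfl fun a _ => (Finset.mul_sum _ _ _).symm
      _ = ∑ a, pol x a * 1 := by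
          refine Finset.sum_congr rfl fun a _ => ?_
          congr 1
          have : ∀ z : X, q (f z) z * p (f x) a (f z) = ∑ s, q s z * p (f x) a s := by
            intro z
            rw [Finset.sum_eq_single (f z)]
            · intro s _ hs
              rw [(hq s).2.1 z (fun h => hs h.symm), zero_mul]
            · intro h; exact absurd (Finset.mem_univ _) h
          simp only [this]
          rw [Finset.sum_comm]
          calc ∑ s, ∑ z, q s z * p (f x) a s
              = ∑ s, (∑ z, q s z) * p (f x) a s := by
                exact Finset.sum_congr rfl fun s _ => (Finset.sum_mul _ _ _).symm
            _ = ∑ s, p (f x) a s := by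
                refine Finset.sum_congr rfl fun s _ => ?_
                rw [(hq s).2.2, one_mul]
            _ = 1 := (hp (f x) a).2
      _ = 1 := by
          simp only [mul_one]
          exact (hpol x).2
  -- part 1 : minorization
  have hmin : ∀ x y z : X, ε * P0 y z ≤ P0 x z := by
    intro x y z
    rw [hεdef, div_mul_eq_mul_div, one_mul, div_le_iff₀ hη2]
    rw [hP0, hP0, Finset.sum_mul]
    refine Finset.sum_le_sum fun a _ => ?_
    have h1 : pol y a ≤ η * pol x a := hreg4 y x a a
    have h2 : p (f y) a (f z) ≤ η * p (f x) a (f z) := (hreg2 (f z) (f y) (f x) a).2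
    have h3 : 0 ≤ pol y a := (hpol y).1 a
    have h4 : 0 ≤ pol x a := (hpol x).1 a
    have h5 : 0 ≤ q (f z) z := (hq (f z)).1 z
    have h6 : 0 ≤ p (f y) a (f z) := (hp (f y) a).1 (f z)
    have h7 : 0 ≤ p (f x) a (f z) := (hp (f x) a).1 (f z)
    nlinarith [mul_nonneg (mul_nonneg h3 h5) (sub_nonneg.mpr h2),
      mul_nonneg (mul_nonneg (mul_nonneg (le_of_lt hη0) h5) h7) (sub_nonneg.mpr h1)]
  refine ⟨hmin, ?_, ?_⟩
  -- part 2 : Dobrushin coefficient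
  · have habs : ∀ a b : ℝ, |a - b| = a + b - 2 * min a b := by
      intro a b
      rcases le_total a b with h | h
      · rw [abs_of_nonpos (by linarith), min_eq_left h]; ring
      · rw [abs_of_nonneg (by linarith), min_eq_right h]; ring
    apply Finset.sup'_le
    rintro ⟨x, y⟩ -
    simp only
    have hsum : ∑ z, |P0 x z - P0 y z| ≤ 2 - 2 * ε := by
      have : ∑ z, |P0 x z - P0 y z|
          = (∑ z, P0 x z) + (∑ z, P0 y z) - 2 * ∑ z, min (P0 x z) (P0 y z) := by
        rw [← Finset.sum_add_distrib, Finset.mul_sum, ← Finset.sum_sub_distrib]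
        exact Finset.sum_congr rfl fun z _ => habs _ _
      rw [this, hrow x, hrow y]
      have hge : ε ≤ ∑ z, min (P0 x z) (P0 y z) := by
        calc ε = ∑ z, ε * P0 x z := by rw [← Finset.mul_sum, hrow x, mul_one]
          _ ≤ ∑ z, min (P0 x z) (P0 y z) := by
              refine Finset.sum_le_sum fun z _ => le_min ?_ (hmin y x z)
              nlinarith [hnonneg x z]
      linarith
    linarith
  -- part 3 : mixing
  · intro μ0 hμ0 Pi0 hPi0 hstat h hh
    -- one-step contraction
    have contract : ∀ u : X → ℝ, (∑ x, u x) = 0 →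
        ∑ z, |∑ x, u x * P0 x z| ≤ (1 - ε) * ∑ x, |u x| := by
      intro u hu
      obtain ⟨x0⟩ := ‹Nonempty X›
      have step : ∀ z, |∑ x, u x * P0 x z| ≤ ∑ x, |u x| * (P0 x z - ε * P0 x0 z) := by
        intro z
        have : ∑ x, u x * P0 x z = ∑ x, u x * (P0 x z - ε * P0 x0 z) := by
          rw [← sub_eq_zero, ← Finset.sum_sub_distrib]
          have : ∀ x, u x * P0 x z - u x * (P0 x z - ε * P0 x0 z)
              = u x * (ε * P0 x0 z) := by intro x; ring
          simp only [this, ← Finset.sum_mul, hu, zero_mul]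
        rw [this]
        calc |∑ x, u x * (P0 x z - ε * P0 x0 z)|
            ≤ ∑ x, |u x * (P0 x z - ε * P0 x0 z)| := Finset.abs_sum_le_sum_abs _ _
          _ = ∑ x, |u x| * (P0 x z - ε * P0 x0 z) := by
              refine Finset.sum_congr rfl fun x _ => ?_
              rw [abs_mul, abs_of_nonneg (sub_nonneg.mpr (hmin x x0 z))]
      calc ∑ z, |∑ x, u x * P0 x z|
          ≤ ∑ z, ∑ x, |u x| * (P0 x z - ε * P0 x0 z) :=
            Finset.sum_le_sum fun z _ => step z
        _ = ∑ x, |u x| * ∑ z, (P0 x z - ε * P0 x0 z) := by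
            rw [Finset.sum_comm]
            exact Finset.sum_congr rfl fun x _ => (Finset.mul_sum _ _ _).symm
        _ = ∑ x, |u x| * (1 - ε) := by
            refine Finset.sum_congr rfl fun x _ => ?_
            congr 1
            rw [Finset.sum_sub_distrib, hrow x, ← Finset.mul_sum, hrow x0, mul_one]
        _ = (1 - ε) * ∑ x, |u x| := by rw [Finset.mul_sum]; exact Finset.sum_congr rfl fun x _ => mul_comm _ _
    -- stationarity in vecMul form
    have hstat' : Matrix.vecMul Pi0 P0 = Pi0 := by
      funext z
      rw [← hstat z]
      simp [Matrix.vecMul, dotProduct]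
    have hvec : ∀ h : ℕ, ∀ z, Matrix.vecMul μ0 (P0 ^ (h+1)) z
        = ∑ x, Matrix.vecMul μ0 (P0 ^ h) x * P0 x z := by
      intro h z
      rw [pow_succ, ← Matrix.vecMul_vecMul]
      simp [Matrix.vecMul, dotProduct]
    -- invariant by induction
    have main : ∀ h : ℕ, (∑ z, Matrix.vecMul μ0 (P0 ^ h) z = 1) ∧
        ∑ z, |Matrix.vecMul μ0 (P0 ^ h) z - Pi0 z| ≤ (1 - ε) ^ h * 2 := by
      intro h
      induction h with
      | zero =>
        simp only [pow_zero, Matrix.vecMul_one]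
        constructor
        · exact hμ0.2
        · calc ∑ z, |μ0 z - Pi0 z| ≤ ∑ z, (μ0 z + Pi0 z) := by
                refine Finset.sum_le_sum fun z _ => ?_
                have := hμ0.1 z; have := hPi0.1 z
                rw [abs_sub_le_iff]; constructor <;> linarith
            _ = 2 := by rw [Finset.sum_add_distrib, hμ0.2, hPi0.2]; norm_num
            _ ≤ (1 - ε) ^ 0 * 2 := by norm_num
      | succ h ih =>
        obtain ⟨ihsum, ihtv⟩ := ih
        have hsum1 : ∑ z, Matrix.vecMul μ0 (P0 ^ (h+1)) z = 1 := by
          simp only [hvec h]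
          rw [Finset.sum_comm]
          calc ∑ x, ∑ z, Matrix.vecMul μ0 (P0 ^ h) x * P0 x z
              = ∑ x, Matrix.vecMul μ0 (P0 ^ h) x * ∑ z, P0 x z := by
                exact Finset.sum_congr rfl fun x _ => (Finset.mul_sum _ _ _).symm
            _ = 1 := by simp only [hrow, mul_one]; exact ihsum
        refine ⟨hsum1, ?_⟩
        have hu : ∑ x, (Matrix.vecMul μ0 (P0 ^ h) x - Pi0 x) = 0 := by
          rw [Finset.sum_sub_distrib, ihsum, hPi0.2, sub_self]
        have key : ∀ z, Matrix.vecMul μ0 (P0 ^ (h+1)) z - Pi0 z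
            = ∑ x, (Matrix.vecMul μ0 (P0 ^ h) x - Pi0 x) * P0 x z := by
          intro z
          rw [hvec h z]
          have : Pi0 z = ∑ x, Pi0 x * P0 x z := (hstat z).symm
          rw [this, ← Finset.sum_sub_distrib]
          exact Finset.sum_congr rfl fun x _ => by ring
        calc ∑ z, |Matrix.vecMul μ0 (P0 ^ (h+1)) z - Pi0 z|
            = ∑ z, |∑ x, (Matrix.vecMul μ0 (P0 ^ h) x - Pi0 x) * P0 x z| := by
              simp only [key]
          _ ≤ (1 - ε) * ∑ x, |Matrix.vecMul μ0 (P0 ^ h) x - Pi0 x| := contract _ hu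
          _ ≤ (1 - ε) * ((1 - ε) ^ h * 2) := by
              apply mul_le_mul_of_nonneg_left ihtv; linarith
          _ = (1 - ε) ^ (h+1) * 2 := by ring
    -- conclude
    have hbound := (main h).2
    have hpow : (1 - ε) ^ h ≤ 1 / 4 := by
      have h1 : (1 - ε) ^ h ≤ Real.exp (-ε) ^ h := by
        apply pow_le_pow_left₀ (by linarith)
        have := Real.add_one_le_exp (-ε); linarith
      have h2 : Real.exp (-ε) ^ h = Real.exp (-(ε * h)) := by
        rw [← Real.exp_nat_mul]; ring_nf
      have h3 : Real.exp (-(ε * h)) ≤ Real.exp (-2) := by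
        apply Real.exp_le_exp.mpr
        have : (2:ℝ) ≤ ε * h := by
          rw [hεdef]
          rw [div_mul_eq_mul_div, one_mul, le_div_iff₀ hη2]
          linarith
        linarith
      have h4 : Real.exp (-2 : ℝ) ≤ 1 / 4 := by
        rw [Real.exp_neg, inv_eq_one_div]
        have he : (2.7182818283 : ℝ) < Real.exp 1 := Real.exp_one_gt_d9
        have h2e : Real.exp 2 = Real.exp 1 * Real.exp 1 := by
          rw [← Real.exp_add]; norm_num
        rw [div_le_div_iff₀ (Real.exp_pos _) (by norm_num)]
        nlinarith
      calc (1 - ε) ^ h ≤ Real.exp (-ε) ^ h := h1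
        _ = Real.exp (-(ε * h)) := h2
        _ ≤ Real.exp (-2) := h3
        _ ≤ 1/4 := h4
    rw [dTV]
    nlinarith
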